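/- Let x_1, …, x_T ∈ ℝ^N (T ≥ 1) and suppose the sample covariance C := (1/T) Σ_{t=1}^T x_t x_tᵀ is positive definite. Define y*_t := C^{-1/2} x_t for each t, where C^{-1/2} is the inverse of the positive definite square root of C. Then: (i) (1/T) Σ_{t=1}^T y*_t (y*_t)ᵀ = I_N; (ii) for every family y_1, …, y_T ∈ ℝ^N satisfying (1/T) Σ_{t=1}^T y_t y_tᵀ = I_N, one has Σ_{t=1}^T ‖x_t − y*_t‖² ≤ Σ_{t=1}^T ‖x_t − y_t‖²; and (iii) equality in (ii) holds if and only if y_t = y*_t for all t. -/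

import Mathlib

open Matrix BigOperators

noncomputable section

section OldSqrt

open scoped ComplexOrder

/-- The square root of a positive semidefinite matrix, as defined in Mathlib (Dec 2024)
under the name `Matrix.PosSemidef.sqrt` (removed since). -/
def Matrix.PosSemidef.sqrt {n : Type*} [Fintype n] [DecidableEq n] {𝕜 : Type*} [RCLike 𝕜]
    {A : Matrix n n 𝕜} (hA : A.PosSemidef) : Matrix n n 𝕜 :=
  hA.1.eigenvectorUnitary.1 * diagonal ((↑) ∘ (√·) ∘ hA.1.eigenvalues) *
  (star hA.1.eigenvectorUnitary : Matrix n n 𝕜)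

end OldSqrt

lemma zca_quad_trace {N : ℕ} (A : Matrix (Fin N) (Fin N) ℝ) (z : Fin N → ℝ) :
    z ⬝ᵥ A.mulVec z = (A * vecMulVec z z).trace := by
  simp only [Matrix.trace, Matrix.diag_apply, Matrix.mul_apply, vecMulVec_apply, dotProduct,
    mulVec, Finset.mul_sum]
  exact Finset.sum_congr rfl fun i _ => Finset.sum_congr rfl fun j _ => by ring

lemma zca_vecMulVec_mulVec {N : ℕ} (A : Matrix (Fin N) (Fin N) ℝ) (u v : Fin N → ℝ) :
    vecMulVec (A.mulVec u) (A.mulVec v) = A * vecMulVec u v * Aᵀ := by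
  ext i j
  simp only [vecMulVec_apply, Matrix.mul_apply, mulVec, dotProduct, transpose_apply]
  rw [Finset.sum_mul_sum, Finset.sum_comm]
  refine Finset.sum_congr rfl fun l _ => ?_
  rw [Finset.sum_mul]
  exact Finset.sum_congr rfl fun k _ => by ring

lemma zca_dot_symm {N : ℕ} {S : Matrix (Fin N) (Fin N) ℝ} (h : Sᵀ = S) (u v : Fin N → ℝ) :
    v ⬝ᵥ S *ᵥ u = u ⬝ᵥ S *ᵥ v := by
  rw [dotProduct_mulVec, ← h, vecMul_transpose, dotProduct_comm, h]

lemma zca_dot_sub {N : ℕ} (u v : Fin N → ℝ) :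
    (u - v) ⬝ᵥ (u - v) = u ⬝ᵥ u - 2 * (u ⬝ᵥ v) + v ⬝ᵥ v := by
  rw [sub_dotProduct, dotProduct_sub, dotProduct_sub, dotProduct_comm v u]; ring

lemma zca_quad_sub {N : ℕ} (S : Matrix (Fin N) (Fin N) ℝ) (u v : Fin N → ℝ) :
    (u - v) ⬝ᵥ S *ᵥ (u - v)
      = u ⬝ᵥ S *ᵥ u - u ⬝ᵥ S *ᵥ v - v ⬝ᵥ S *ᵥ u + v ⬝ᵥ S *ᵥ v := by
  rw [mulVec_sub, dotProduct_sub, sub_dotProduct, sub_dotProduct]; ring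

/-- quadratic-form sums under the white covariance constraint equal `T * trace`. -/
lemma zca_sum_quad {N T : ℕ} (hT0 : (T : ℝ) ≠ 0) (z : Fin T → (Fin N → ℝ))
    (hz : (T : ℝ)⁻¹ • ∑ t, vecMulVec (z t) (z t) = (1 : Matrix (Fin N) (Fin N) ℝ))
    (A : Matrix (Fin N) (Fin N) ℝ) :
    ∑ t, z t ⬝ᵥ A *ᵥ z t = (T : ℝ) * A.trace := by
  have hz' : ∑ t, vecMulVec (z t) (z t) = (T : ℝ) • (1 : Matrix (Fin N) (Fin N) ℝ) := by
    have := congrArg (fun M : Matrix (Fin N) (Fin N) ℝ => (T : ℝ) • M) hz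
    simpa [smul_smul, mul_inv_cancel₀ hT0] using this
  calc ∑ t, z t ⬝ᵥ A *ᵥ z t = ∑ t, (A * vecMulVec (z t) (z t)).trace := by
        exact Finset.sum_congr rfl fun t _ => zca_quad_trace A (z t)
    _ = (A * ∑ t, vecMulVec (z t) (z t)).trace := by
        rw [Finset.mul_sum, trace_sum]
    _ = (T : ℝ) * A.trace := by
        rw [hz', Matrix.mul_smul, mul_one, trace_smul]; simp


/-- ZCA (symmetric) whitening optimality (Appendix B): with positive definite sample covariance
`C = (1/T) Σₜ xₜ xₜᵀ`, the outputs `y*ₜ = C^{-1/2} xₜ` (i) have identity sample covariance,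
(ii) minimize `Σₜ ‖xₜ − yₜ‖²` among all families with identity sample covariance, and
(iii) are the unique such minimizer. -/
theorem zca_whitening_optimal
    (N T : ℕ) (hT : 1 ≤ T)
    (x : Fin T → (Fin N → ℝ))
    (hC : Matrix.PosDef ((T : ℝ)⁻¹ • ∑ t, vecMulVec (x t) (x t)))
    (ystar : Fin T → (Fin N → ℝ))
    (hystar : ∀ t, ystar t = (hC.posSemidef.sqrt)⁻¹.mulVec (x t)) :
    ((T : ℝ)⁻¹ • ∑ t, vecMulVec (ystar t) (ystar t) = (1 : Matrix (Fin N) (Fin N) ℝ)) ∧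
    (∀ y : Fin T → (Fin N → ℝ),
      (T : ℝ)⁻¹ • ∑ t, vecMulVec (y t) (y t) = (1 : Matrix (Fin N) (Fin N) ℝ) →
      ((∑ t, (x t - ystar t) ⬝ᵥ (x t - ystar t) ≤ ∑ t, (x t - y t) ⬝ᵥ (x t - y t)) ∧
       (∑ t, (x t - ystar t) ⬝ᵥ (x t - ystar t) = ∑ t, (x t - y t) ⬝ᵥ (x t - y t) ↔
         y = ystar))) := by
  have hT0 : (T : ℝ) ≠ 0 := Nat.cast_ne_zero.mpr (by omega)
  set S := hC.posSemidef.sqrt with hSdef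
  have hSpsd : S.PosSemidef := by
    have hd : (diagonal ((RCLike.ofReal : ℝ → ℝ) ∘ (√·) ∘ hC.posSemidef.1.eigenvalues)).PosSemidef :=
      posSemidef_diagonal_iff.mpr fun i => by simp [Real.sqrt_nonneg]
    simpa [S, Matrix.PosSemidef.sqrt, star_eq_conjTranspose] using
      hd.mul_mul_conjTranspose_same (hC.posSemidef.1.eigenvectorUnitary : Matrix (Fin N) (Fin N) ℝ)
  have hSS : S * S = (T : ℝ)⁻¹ • ∑ t, vecMulVec (x t) (x t) := by
    have hU := Unitary.star_mul_self_of_mem hC.posSemidef.1.eigenvectorUnitary.2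
    have hDD : (diagonal ((RCLike.ofReal : ℝ → ℝ) ∘ (√·) ∘ hC.posSemidef.1.eigenvalues)) *
        diagonal ((RCLike.ofReal : ℝ → ℝ) ∘ (√·) ∘ hC.posSemidef.1.eigenvalues)
        = diagonal (RCLike.ofReal ∘ hC.posSemidef.1.eigenvalues) := by
      rw [diagonal_mul_diagonal]
      congr 1; funext i
      simp [Real.mul_self_sqrt (hC.posSemidef.eigenvalues_nonneg i)]
    conv_rhs => rw [hC.posSemidef.1.spectral_theorem]
    simp only [S, Matrix.PosSemidef.sqrt, Unitary.conjStarAlgAut_apply]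
    calc _ = (hC.posSemidef.1.eigenvectorUnitary : Matrix (Fin N) (Fin N) ℝ) *
          (diagonal ((RCLike.ofReal : ℝ → ℝ) ∘ (√·) ∘ hC.posSemidef.1.eigenvalues) *
          (star (hC.posSemidef.1.eigenvectorUnitary : Matrix (Fin N) (Fin N) ℝ) *
            (hC.posSemidef.1.eigenvectorUnitary : Matrix (Fin N) (Fin N) ℝ)) *
          diagonal ((RCLike.ofReal : ℝ → ℝ) ∘ (√·) ∘ hC.posSemidef.1.eigenvalues)) *
          star (hC.posSemidef.1.eigenvectorUnitary : Matrix (Fin N) (Fin N) ℝ) := by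
          simp only [Matrix.mul_assoc]
      _ = _ := by rw [hU, Matrix.mul_one, hDD]
  have hSsymm : Sᵀ = S := (by simpa using hSpsd.1 : S.IsSymm)
  have hSdet : IsUnit S.det := by
    have hpos := hC.det_pos
    rw [← hSS, det_mul] at hpos
    refine isUnit_iff_ne_zero.mpr fun h => ?_
    rw [h, mul_zero] at hpos; exact lt_irrefl _ hpos
  have hSinvS : S⁻¹ * S = 1 := nonsing_inv_mul S hSdet
  have hSSinv : S * S⁻¹ = 1 := mul_nonsing_inv S hSdet
  have hSinvT : (S⁻¹)ᵀ = S⁻¹ := by rw [transpose_nonsing_inv, hSsymm]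
  have hSpd : S.PosDef := by
    refine PosDef.of_dotProduct_mulVec_pos hSpsd.1 fun z hz => ?_
    rcases lt_or_eq_of_le (hSpsd.dotProduct_mulVec_nonneg z) with h | h
    · exact h
    · exfalso
      have h0 : S *ᵥ z = 0 := by
        have := (hSpsd.dotProduct_mulVec_zero_iff z).mp ?_
        · exact this
        · simpa using h.symm
      have : z = 0 := by
        have := congrArg (fun w => S⁻¹ *ᵥ w) h0
        simpa [mulVec_mulVec, hSinvS] using this
      exact hz this
  have hx : ∀ t, x t = S *ᵥ ystar t := fun t => by
    rw [hystar t, mulVec_mulVec, hSSinv, one_mulVec]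
  -- part (i)
  have part1 : (T : ℝ)⁻¹ • ∑ t, vecMulVec (ystar t) (ystar t)
      = (1 : Matrix (Fin N) (Fin N) ℝ) := by
    have e1 : ∑ t, vecMulVec (ystar t) (ystar t)
        = S⁻¹ * (∑ t, vecMulVec (x t) (x t)) * (S⁻¹)ᵀ := by
      simp_rw [hystar, zca_vecMulVec_mulVec]
      rw [← Finset.sum_mul, ← Finset.mul_sum]
    rw [e1, hSinvT]
    have e2 : (T : ℝ)⁻¹ • (S⁻¹ * (∑ t, vecMulVec (x t) (x t)) * S⁻¹)
        = S⁻¹ * ((T : ℝ)⁻¹ • ∑ t, vecMulVec (x t) (x t)) * S⁻¹ := by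
      rw [Matrix.mul_smul, Matrix.smul_mul]
    rw [e2, ← hSS,
      show S⁻¹ * (S * S) * S⁻¹ = (S⁻¹ * S) * (S * S⁻¹) by noncomm_ring,
      hSinvS, hSSinv, one_mul]
  refine ⟨part1, fun y hy => ?_⟩
  -- collected quadratic-form sums
  have hyy : ∑ t, y t ⬝ᵥ y t = (T : ℝ) * N := by
    have := zca_sum_quad hT0 y hy 1
    simpa using this
  have hss : ∑ t, ystar t ⬝ᵥ ystar t = (T : ℝ) * N := by
    have := zca_sum_quad hT0 ystar part1 1
    simpa using this
  have hySy : ∑ t, y t ⬝ᵥ S *ᵥ y t = (T : ℝ) * S.trace := zca_sum_quad hT0 y hy S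
  have hsSs : ∑ t, ystar t ⬝ᵥ S *ᵥ ystar t = (T : ℝ) * S.trace :=
    zca_sum_quad hT0 ystar part1 S
  -- key identity
  have key : ∑ t, (x t - y t) ⬝ᵥ (x t - y t) - ∑ t, (x t - ystar t) ⬝ᵥ (x t - ystar t)
      = ∑ t, (y t - ystar t) ⬝ᵥ S *ᵥ (y t - ystar t) := by
    have hxy : ∀ t, x t ⬝ᵥ y t = ystar t ⬝ᵥ S *ᵥ y t := fun t => by
      rw [hx t, dotProduct_comm, zca_dot_symm hSsymm]
    have hxs : ∀ t, x t ⬝ᵥ ystar t = ystar t ⬝ᵥ S *ᵥ ystar t := fun t => by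
      rw [hx t, dotProduct_comm, zca_dot_symm hSsymm]
    have e1 : ∑ t, (x t - y t) ⬝ᵥ (x t - y t)
        = ∑ t, x t ⬝ᵥ x t - 2 * ∑ t, ystar t ⬝ᵥ S *ᵥ y t + ∑ t, y t ⬝ᵥ y t := by
      simp_rw [zca_dot_sub, Finset.sum_add_distrib, Finset.sum_sub_distrib, ← Finset.mul_sum]
      simp_rw [hxy]
    have e2 : ∑ t, (x t - ystar t) ⬝ᵥ (x t - ystar t)
        = ∑ t, x t ⬝ᵥ x t - 2 * ∑ t, ystar t ⬝ᵥ S *ᵥ ystar t + ∑ t, ystar t ⬝ᵥ ystar t := by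
      simp_rw [zca_dot_sub, Finset.sum_add_distrib, Finset.sum_sub_distrib, ← Finset.mul_sum]
      simp_rw [hxs]
    have e3 : ∑ t, (y t - ystar t) ⬝ᵥ S *ᵥ (y t - ystar t)
        = ∑ t, y t ⬝ᵥ S *ᵥ y t - 2 * ∑ t, ystar t ⬝ᵥ S *ᵥ y t
          + ∑ t, ystar t ⬝ᵥ S *ᵥ ystar t := by
      simp_rw [zca_quad_sub, Finset.sum_add_distrib, Finset.sum_sub_distrib]
      have : ∀ t, y t ⬝ᵥ S *ᵥ ystar t = ystar t ⬝ᵥ S *ᵥ y t := fun t =>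
        zca_dot_symm hSsymm _ _
      simp_rw [this]; ring
    rw [e1, e2, e3, hyy, hss, hySy, hsSs]; ring
  have hterm_nonneg : ∀ t, 0 ≤ (y t - ystar t) ⬝ᵥ S *ᵥ (y t - ystar t) := fun t => by
    simpa using hSpsd.dotProduct_mulVec_nonneg (y t - ystar t)
  have hsum_nonneg : 0 ≤ ∑ t, (y t - ystar t) ⬝ᵥ S *ᵥ (y t - ystar t) :=
    Finset.sum_nonneg fun t _ => hterm_nonneg t
  constructor
  · linarith [key]
  constructor
  · intro heq
    have hzero : ∑ t, (y t - ystar t) ⬝ᵥ S *ᵥ (y t - ystar t) = 0 := by linarith [key]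
    funext t
    by_contra hne
    have hdne : y t - ystar t ≠ 0 := sub_ne_zero.mpr hne
    have hpos : 0 < (y t - ystar t) ⬝ᵥ S *ᵥ (y t - ystar t) := by
      simpa using hSpd.dotProduct_mulVec_pos hdne
    have hzt : (y t - ystar t) ⬝ᵥ S *ᵥ (y t - ystar t) = 0 :=
      (Finset.sum_eq_zero_iff_of_nonneg fun t _ => hterm_nonneg t).mp hzero t (Finset.mem_univ t)
    linarith
  · intro heq
    subst heq
    rfl

end
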